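/- arXiv:2504.21845 — 5 statements merged into one kernel-verified Lean document; each statement's English description precedes it below -/
import Mathlib

section
/- Let H₁ be an r₁×n₁ matrix and H₂ an r₂×n₂ matrix over F₂. Define H_X = ( I_{n₁} ⊗ H₂ | H₁ᵀ ⊗ I_{r₂} ) (an (n₁·r₂) × (n₁·n₂ + r₁·r₂) matrix) and H_Z = ( H₁ ⊗ I_{n₂} | I_{r₁} ⊗ H₂ᵀ ) (an (r₁·n₂) × (n₁·n₂ + r₁·r₂) matrix), where ⊗ denotes the Kronecker product and ( A | B ) denotes horizontal block concatenation. Then H_X · H_Zᵀ = 0. -/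
open Matrix Kronecker

/-- The hypergraph product construction satisfies the CSS condition `H_X * H_Zᵀ = 0`. -/
theorem hgp_css_condition (r₁ n₁ r₂ n₂ : ℕ)
    (H₁ : Matrix (Fin r₁) (Fin n₁) (ZMod 2))
    (H₂ : Matrix (Fin r₂) (Fin n₂) (ZMod 2)) :
    (Matrix.fromCols ((1 : Matrix (Fin n₁) (Fin n₁) (ZMod 2)) ⊗ₖ H₂)
        (H₁ᵀ ⊗ₖ (1 : Matrix (Fin r₂) (Fin r₂) (ZMod 2)))) *
      (Matrix.fromCols (H₁ ⊗ₖ (1 : Matrix (Fin n₂) (Fin n₂) (ZMod 2)))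
        ((1 : Matrix (Fin r₁) (Fin r₁) (ZMod 2)) ⊗ₖ H₂ᵀ))ᵀ = 0 := by
  rw [Matrix.transpose_fromCols, Matrix.fromCols_mul_fromRows]
  simp only [← Matrix.kroneckerMap_transpose, Matrix.transpose_one, Matrix.transpose_transpose,
    ← Matrix.mul_kronecker_mul, Matrix.one_mul, Matrix.mul_one]
  ext i j
  simp only [Matrix.add_apply, Matrix.zero_apply, ← two_mul, show (2:ZMod 2) = 0 from rfl, zero_mul]
end

section
/- Let H be an m×n matrix over F₂, and let H_X = ( Iₙ ⊗ H | Hᵀ ⊗ Iₘ ) and H_Z = ( H ⊗ Iₙ | Iₘ ⊗ Hᵀ ) be the check matrices of the hypergraph product code HGP(H,H), each with n² + m² columns. Then dim ker(H_X) + dim ker(H_Z) ≥ (n² + m²) + (n − m)², where ker denotes the kernel of the linear map x ↦ H_X x (respectively x ↦ H_Z x) on F₂^{n²+m²}. Equivalently, the number of logical qubits k = dim ker(H_X) + dim ker(H_Z) − (n² + m²) of the CSS code satisfies k ≥ (n − m)². -/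
open Matrix Kronecker

lemma ker_ge_of_matrix {K : Type*} [Field K] {α β : Type*} [Fintype α] [Fintype β]
    [DecidableEq β] (M : Matrix α β K) :
    Module.finrank K (LinearMap.ker M.mulVecLin) + Fintype.card α ≥ Fintype.card β := by
  have h := LinearMap.finrank_range_add_finrank_ker M.mulVecLin
  have hr : Module.finrank K (LinearMap.range M.mulVecLin) ≤ Fintype.card α := by
    have := Submodule.finrank_le (LinearMap.range M.mulVecLin)
    simpa [Module.finrank_fintype_fun_eq_card] using this
  have hd : Module.finrank K (β → K) = Fintype.card β := by
    simp [Module.finrank_fintype_fun_eq_card]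
  omega

/-- The number of logical qubits of the hypergraph product code `HGP(H,H)` satisfies
`k = dim ker H_X + dim ker H_Z − (n² + m²) ≥ (n − m)²`. -/
theorem hgp_dimension_bound (m n : ℕ) (H : Matrix (Fin m) (Fin n) (ZMod 2))
    (kX kZ : ℕ)
    (hkX : kX = Module.finrank (ZMod 2)
        (LinearMap.ker (Matrix.mulVecLin
          (Matrix.fromCols ((1 : Matrix (Fin n) (Fin n) (ZMod 2)) ⊗ₖ H)
            (Hᵀ ⊗ₖ (1 : Matrix (Fin m) (Fin m) (ZMod 2)))))))
    (hkZ : kZ = Module.finrank (ZMod 2)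
        (LinearMap.ker (Matrix.mulVecLin
          (Matrix.fromCols (H ⊗ₖ (1 : Matrix (Fin n) (Fin n) (ZMod 2)))
            ((1 : Matrix (Fin m) (Fin m) (ZMod 2)) ⊗ₖ Hᵀ))))) :
    ((kX : ℤ) + (kZ : ℤ)) ≥ ((n^2 + m^2 : ℕ) : ℤ) + ((n : ℤ) - (m : ℤ))^2 := by
  have hX := ker_ge_of_matrix (Matrix.fromCols ((1 : Matrix (Fin n) (Fin n) (ZMod 2)) ⊗ₖ H)
            (Hᵀ ⊗ₖ (1 : Matrix (Fin m) (Fin m) (ZMod 2))))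
  have hZ := ker_ge_of_matrix (Matrix.fromCols (H ⊗ₖ (1 : Matrix (Fin n) (Fin n) (ZMod 2)))
            ((1 : Matrix (Fin m) (Fin m) (ZMod 2)) ⊗ₖ Hᵀ))
  simp only [Fintype.card_sum, Fintype.card_prod, Fintype.card_fin] at hX hZ
  rw [← hkX] at hX
  rw [← hkZ] at hZ
  have hX' : (kX : ℤ) + (n : ℤ) * m ≥ (n : ℤ) * n + (m : ℤ) * m := by exact_mod_cast hX
  have hZ' : (kZ : ℤ) + (m : ℤ) * n ≥ (n : ℤ) * n + (m : ℤ) * m := by exact_mod_cast hZ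
  push_cast
  nlinarith [hX', hZ']
end

section
/- Let H be an m×n matrix over F₂ and let H_Z = ( H ⊗ Iₙ | Iₘ ⊗ Hᵀ ) be the Z-check matrix of HGP(H,H), with columns indexed by V_Q = (Fin n × Fin n) ⊕ (Fin m × Fin m) and rows indexed by Fin m × Fin n, so that H_Z[(c,v), (v₁,v₂)] = H[c,v₁] if v₂ = v and 0 otherwise, and H_Z[(c,v), (c₁,c₂)] = H[c₂,v] if c₁ = c and 0 otherwise. If S ⊆ Fin n is a stopping set for H, then for every v ∈ Fin n the set S × {v} ⊆ Fin n × Fin n (viewed as a subset of V_Q of V²-qubits) is a stopping set for H_Z. -/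
open Matrix Kronecker Finset

/-- The Z-check matrix `H_Z = ( H ⊗ Iₙ | Iₘ ⊗ Hᵀ )` of `HGP(H,H)`, with rows indexed by
`Fin m × Fin n` and columns indexed by the qubits `(Fin n × Fin n) ⊕ (Fin m × Fin m)`. -/
def hgpHZ (m n : ℕ) (H : Matrix (Fin m) (Fin n) (ZMod 2)) :
    Matrix (Fin m × Fin n) ((Fin n × Fin n) ⊕ (Fin m × Fin m)) (ZMod 2) :=
  Matrix.fromCols (H ⊗ₖ (1 : Matrix (Fin n) (Fin n) (ZMod 2)))
    ((1 : Matrix (Fin m) (Fin m) (ZMod 2)) ⊗ₖ Hᵀ)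

/-- If `S` is a stopping set for `H`, then for every `v` the horizontal copy
`S × {v}` of `S` among the V²-qubits is a stopping set for `H_Z`. -/
theorem horizontal_stopping_set (m n : ℕ) (H : Matrix (Fin m) (Fin n) (ZMod 2))
    (S : Finset (Fin n))
    (hS : ∀ c : Fin m, (S.filter (fun v => H c v ≠ 0)).card ≠ 1)
    (v : Fin n) (r : Fin m × Fin n) :
    ((S.image (fun v₁ => (Sum.inl (v₁, v) : (Fin n × Fin n) ⊕ (Fin m × Fin m)))).filter
        (fun q => hgpHZ m n H r q ≠ 0)).card ≠ 1 := by
  have hinj : Function.Injective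
      (fun v₁ => (Sum.inl (v₁, v) : (Fin n × Fin n) ⊕ (Fin m × Fin m))) := by
    intro a b h
    simpa using h
  rw [Finset.filter_image, Finset.card_image_of_injective _ hinj]
  have hval : ∀ v₁ : Fin n,
      hgpHZ m n H r (Sum.inl (v₁, v)) = H r.1 v₁ * (if r.2 = v then 1 else 0) := by
    intro v₁
    simp [hgpHZ, Matrix.fromCols, Matrix.one_apply]
  by_cases hr : r.2 = v
  · have : (S.filter fun v₁ => hgpHZ m n H r (Sum.inl (v₁, v)) ≠ 0)
        = S.filter (fun v₁ => H r.1 v₁ ≠ 0) := by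
      apply Finset.filter_congr
      intro x _
      simp [hval, hr]
    rw [this]
    exact hS r.1
  · have : (S.filter fun v₁ => hgpHZ m n H r (Sum.inl (v₁, v)) ≠ 0) = ∅ := by
      apply Finset.filter_eq_empty_iff.mpr
      intro x _
      simp [hval, hr]
    simp [this]
end

section
/- Let H be an m×n matrix over F₂ and let H_Z = ( H ⊗ Iₙ | Iₘ ⊗ Hᵀ ) be the Z-check matrix of HGP(H,H), with columns indexed by V_Q = (Fin n × Fin n) ⊕ (Fin m × Fin m) and rows indexed by Fin m × Fin n, so that H_Z[(c,v), (v₁,v₂)] = H[c,v₁] if v₂ = v and 0 otherwise, and H_Z[(c,v), (c₁,c₂)] = H[c₂,v] if c₁ = c and 0 otherwise. If S ⊆ Fin m is a stopping set for the transpose matrix Hᵀ (whose rows are indexed by Fin n and columns by Fin m), then for every c ∈ Fin m the set {c} × S ⊆ Fin m × Fin m (viewed as a subset of V_Q of C²-qubits) is a stopping set for H_Z. -/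
open Matrix Kronecker Finset

/-- If `S` is a stopping set for the transpose matrix `Hᵀ`, then for every `c` the
vertical copy `{c} × S` of `S` among the C²-qubits is a stopping set for `H_Z`. -/
theorem vertical_stopping_set (m n : ℕ) (H : Matrix (Fin m) (Fin n) (ZMod 2))
    (S : Finset (Fin m))
    (hS : ∀ v : Fin n, (S.filter (fun c => Hᵀ v c ≠ 0)).card ≠ 1)
    (c : Fin m) (r : Fin m × Fin n) :
    ((S.image (fun c₂ => (Sum.inr (c, c₂) : (Fin n × Fin n) ⊕ (Fin m × Fin m)))).filter
        (fun q => hgpHZ m n H r q ≠ 0)).card ≠ 1 := by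
  have hinj : Function.Injective
      (fun c₂ => (Sum.inr (c, c₂) : (Fin n × Fin n) ⊕ (Fin m × Fin m))) := by
    intro a b h; simpa using h
  rw [Finset.filter_image, Finset.card_image_of_injective _ hinj]
  have hval : ∀ c₂ : Fin m,
      hgpHZ m n H r (Sum.inr (c, c₂)) = (1 : Matrix (Fin m) (Fin m) (ZMod 2)) r.1 c * Hᵀ r.2 c₂ := by
    intro c₂
    simp [hgpHZ, Matrix.fromCols, Matrix.kroneckerMap_apply]
  by_cases hc : r.1 = c
  · have : (S.filter fun c₂ => hgpHZ m n H r (Sum.inr (c, c₂)) ≠ 0)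
        = S.filter (fun c₂ => Hᵀ r.2 c₂ ≠ 0) := by
      apply Finset.filter_congr
      intro x _
      simp [hval, hc, Matrix.one_apply]
    rw [this]; exact hS r.2
  · have : (S.filter fun c₂ => hgpHZ m n H r (Sum.inr (c, c₂)) ≠ 0) = ∅ := by
      apply Finset.filter_false_of_mem
      intro x _
      simp [hval, Matrix.one_apply, hc]
    simp [this]
end

section
/- Let H be an m×n matrix over F₂ such that every x ∈ F₂ⁿ with Hx = 0 and x ≠ 0 has Hamming weight at least d, and every z ∈ F₂^m with Hᵀz = 0 and z ≠ 0 has Hamming weight at least dᵀ. Let H_X = ( Iₙ ⊗ H | Hᵀ ⊗ Iₘ ) and H_Z = ( H ⊗ Iₙ | Iₘ ⊗ Hᵀ ) be the check matrices of HGP(H,H), each with N = n² + m² columns. Then every x ∈ F₂^N with H_Z x = 0 that does not lie in the row space of H_X (the F₂-span of the rows of H_X) has Hamming weight at least min(d, dᵀ). -/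
open Matrix Kronecker Finset

/-- The X-check matrix `H_X = ( Iₙ ⊗ H | Hᵀ ⊗ Iₘ )` of `HGP(H,H)`. -/
def hgpHX (m n : ℕ) (H : Matrix (Fin m) (Fin n) (ZMod 2)) :
    Matrix (Fin n × Fin m) ((Fin n × Fin n) ⊕ (Fin m × Fin m)) (ZMod 2) :=
  Matrix.fromCols ((1 : Matrix (Fin n) (Fin n) (ZMod 2)) ⊗ₖ H)
    (Hᵀ ⊗ₖ (1 : Matrix (Fin m) (Fin m) (ZMod 2)))

lemma zmod2_matrix_add_self {α β : Type*} (M : Matrix α β (ZMod 2)) : M + M = 0 := by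
  ext i j
  have : ∀ a : ZMod 2, a + a = 0 := by decide
  simpa using this (M i j)

lemma zmod2_matrix_eq_of_add_eq_zero {α β : Type*} {M N : Matrix α β (ZMod 2)}
    (h : M + N = 0) : M = N := by
  have h2 := zmod2_matrix_add_self N
  calc M = M + (N + N) := by rw [h2, add_zero]
  _ = (M + N) + N := by rw [add_assoc]
  _ = N := by rw [h, zero_add]

/-- Every linear map between vector spaces has a "generalized inverse". -/
lemma exists_ginv_lin {K V W : Type*} [Field K] [AddCommGroup V] [Module K V]
    [AddCommGroup W] [Module K W] (f : V →ₗ[K] W) :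
    ∃ g : W →ₗ[K] V, f ∘ₗ g ∘ₗ f = f := by
  obtain ⟨q, hq⟩ := Submodule.exists_isCompl (LinearMap.range f)
  obtain ⟨s, hs⟩ := f.rangeRestrict.exists_rightInverse_of_surjective f.range_rangeRestrict
  refine ⟨s ∘ₗ (Submodule.linearProjOfIsCompl _ q hq), ?_⟩
  ext v
  have h1 : (Submodule.linearProjOfIsCompl _ q hq) (f v)
      = ⟨f v, LinearMap.mem_range_self f v⟩ :=
    Submodule.linearProjOfIsCompl_apply_left hq ⟨f v, LinearMap.mem_range_self f v⟩
  have h2 : ∀ y : LinearMap.range f, f (s y) = (y : W) := by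
    intro y
    have hy : f.rangeRestrict (s y) = y := congrArg (fun t => t y) hs
    calc f (s y) = ↑(f.rangeRestrict (s y)) := rfl
    _ = (y : W) := by rw [hy]
  simp only [LinearMap.comp_apply, h1, h2]

/-- Every matrix over a field has a generalized inverse: `H * G * H = H`. -/
lemma exists_ginv {K : Type*} [Field K] {m n : ℕ} (H : Matrix (Fin m) (Fin n) K) :
    ∃ G : Matrix (Fin n) (Fin m) K, H * G * H = H := by
  obtain ⟨g, hg⟩ := exists_ginv_lin (Matrix.toLin' H)
  refine ⟨LinearMap.toMatrix' g, ?_⟩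
  apply Matrix.toLin'.injective
  rw [Matrix.toLin'_mul, Matrix.toLin'_mul, Matrix.toLin'_toMatrix']
  exact hg

/-- If `A` kills `ker H`, then `A = A * (G * H)` for a generalized inverse `G` of `H`. -/
lemma colfix {m n : ℕ} (H : Matrix (Fin m) (Fin n) (ZMod 2))
    (G : Matrix (Fin n) (Fin m) (ZMod 2)) (A : Matrix (Fin n) (Fin n) (ZMod 2))
    (hG : H * G * H = H)
    (hAker : ∀ y : Fin n → ZMod 2, H.mulVec y = 0 → A.mulVec y = 0) :
    A * (G * H) = A := by
  have hzero : H * (1 + G * H) = 0 := by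
    rw [Matrix.mul_add, Matrix.mul_one, ← Matrix.mul_assoc, hG]
    exact zmod2_matrix_add_self H
  have hz : A * (1 + G * H) = 0 := by
    ext i j
    have hcol : H.mulVec ((1 + G * H).mulVec (Pi.single j 1)) = 0 := by
      rw [Matrix.mulVec_mulVec, hzero, Matrix.zero_mulVec]
    have hAc := hAker _ hcol
    have e1 : (A * ((1 : Matrix (Fin n) (Fin n) (ZMod 2)) + G * H)) i j
        = ((A * (1 + G * H)).mulVec (Pi.single j 1)) i := by
      simp [Matrix.mulVec_single_one]
    rw [e1, ← Matrix.mulVec_mulVec, hAc]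
    rfl
  have hsum : A + A * (G * H) = 0 := by
    rw [Matrix.mul_add, Matrix.mul_one] at hz
    exact hz
  exact (zmod2_matrix_eq_of_add_eq_zero hsum).symm

/-- If `B` is killed by `ker Hᵀ`, then `B = H * (G * B)`. -/
lemma rowfix {m n : ℕ} (H : Matrix (Fin m) (Fin n) (ZMod 2))
    (G : Matrix (Fin n) (Fin m) (ZMod 2)) (B : Matrix (Fin m) (Fin m) (ZMod 2))
    (hG : H * G * H = H)
    (hBker : ∀ z : Fin m → ZMod 2, Hᵀ.mulVec z = 0 → Matrix.vecMul z B = 0) :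
    H * (G * B) = B := by
  have hzero : (1 + H * G) * H = 0 := by
    rw [Matrix.add_mul, Matrix.one_mul, hG]
    exact zmod2_matrix_add_self H
  have hz : (1 + H * G) * B = 0 := by
    ext i j
    have hrow : Hᵀ.mulVec (Matrix.vecMul (Pi.single i 1) (1 + H * G)) = 0 := by
      rw [Matrix.mulVec_transpose, Matrix.vecMul_vecMul, hzero, Matrix.vecMul_zero]
    have hBc := hBker _ hrow
    have e1 : (((1 : Matrix (Fin m) (Fin m) (ZMod 2)) + H * G) * B) i j
        = (Matrix.vecMul (Pi.single i 1) ((1 + H * G) * B)) j := by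
      simp [Matrix.single_one_vecMul]
    rw [e1, ← Matrix.vecMul_vecMul, hBc]
    rfl
  have hsum : B + (H * G) * B = 0 := by
    rw [Matrix.add_mul, Matrix.one_mul] at hz
    exact hz
  rw [← Matrix.mul_assoc]
  exact (zmod2_matrix_eq_of_add_eq_zero hsum).symm

/-- The key algebraic identities for the stabilizer coefficient matrix. -/
lemma stab_eqs {m n : ℕ} (H : Matrix (Fin m) (Fin n) (ZMod 2))
    (G : Matrix (Fin n) (Fin m) (ZMod 2))
    (A : Matrix (Fin n) (Fin n) (ZMod 2)) (B : Matrix (Fin m) (Fin m) (ZMod 2))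
    (hG : H * G * H = H) (hmat : H * A = B * H)
    (hA1 : A * (G * H) = A) (hB1 : H * (G * B) = B) :
    (A * G + G * (H * (G * B + A * G))) * H = A ∧
    H * (A * G + G * (H * (G * B + A * G))) = B := by
  have hHGH : ∀ {k : Type} [Fintype k] (M : Matrix (Fin n) k (ZMod 2)),
      H * (G * (H * M)) = H * M := by
    intro k _ M
    rw [← Matrix.mul_assoc, ← Matrix.mul_assoc, hG]
  constructor
  · simp only [Matrix.add_mul, Matrix.mul_add, Matrix.mul_assoc]
    rw [hA1, ← hmat, hHGH, zmod2_matrix_add_self, add_zero]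
  · simp only [Matrix.mul_add, Matrix.mul_assoc]
    rw [hHGH (G * B), hHGH (A * G), hB1]
    rw [add_comm B (H * (A * G)), ← add_assoc, zmod2_matrix_add_self, zero_add]

lemma span_apply_inl {m n : ℕ} (H : Matrix (Fin m) (Fin n) (ZMod 2))
    (Λ : Matrix (Fin n) (Fin m) (ZMod 2)) (p : Fin n × Fin n) :
    (∑ g : Fin n × Fin m, Λ g.1 g.2 • hgpHX m n H g) (Sum.inl p) = (Λ * H) p.1 p.2 := by
  rw [Finset.sum_apply]
  simp [hgpHX, fromCols_apply_inl, kroneckerMap_apply,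
    Matrix.one_apply, mul_ite, ite_mul, mul_one, mul_zero, one_mul, zero_mul,
    Fintype.sum_prod_type, Finset.sum_ite_eq, Finset.sum_ite_eq',
    Matrix.mul_apply, mul_comm, smul_eq_mul]

lemma span_apply_inr {m n : ℕ} (H : Matrix (Fin m) (Fin n) (ZMod 2))
    (Λ : Matrix (Fin n) (Fin m) (ZMod 2)) (p : Fin m × Fin m) :
    (∑ g : Fin n × Fin m, Λ g.1 g.2 • hgpHX m n H g) (Sum.inr p) = (H * Λ) p.1 p.2 := by
  rw [Finset.sum_apply]
  simp [hgpHX, fromCols_apply_inr, kroneckerMap_apply,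
    Matrix.one_apply, mul_ite, ite_mul, mul_one, mul_zero, one_mul, zero_mul,
    Fintype.sum_prod_type, Finset.sum_ite_eq, Finset.sum_ite_eq',
    Matrix.mul_apply, mul_comm, smul_eq_mul]

/-- Tillich–Zémor distance bound for `HGP(H,H)`: if every nonzero codeword of `ker H`
has weight at least `d` and every nonzero codeword of `ker Hᵀ` has weight at least `dᵀ`,
then every element of `ker H_Z` outside the row space of `H_X` has weight at least
`min(d, dᵀ)`. -/
theorem hgp_distance_bound (m n d dT : ℕ) (H : Matrix (Fin m) (Fin n) (ZMod 2))
    (hd : ∀ x : Fin n → ZMod 2, H.mulVec x = 0 → x ≠ 0 →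
      d ≤ (univ.filter (fun v => x v ≠ 0)).card)
    (hdT : ∀ z : Fin m → ZMod 2, Hᵀ.mulVec z = 0 → z ≠ 0 →
      dT ≤ (univ.filter (fun c => z c ≠ 0)).card)
    (x : ((Fin n × Fin n) ⊕ (Fin m × Fin m)) → ZMod 2)
    (hx : (hgpHZ m n H).mulVec x = 0)
    (hxrow : x ∉ Submodule.span (ZMod 2) (Set.range (fun g => hgpHX m n H g))) :
    min d dT ≤ (univ.filter (fun q => x q ≠ 0)).card := by
  classical
  by_contra hlt
  push_neg at hlt
  obtain ⟨G, hG⟩ := exists_ginv H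
  set A : Matrix (Fin n) (Fin n) (ZMod 2) := fun v1 v2 => x (Sum.inl (v1, v2)) with hA
  set B : Matrix (Fin m) (Fin m) (ZMod 2) := fun c1 c2 => x (Sum.inr (c1, c2)) with hB
  set sA : Finset (Fin n × Fin n) := univ.filter (fun p => A p.1 p.2 ≠ 0) with hsA
  set sB : Finset (Fin m × Fin m) := univ.filter (fun p => B p.1 p.2 ≠ 0) with hsB
  have htot : sA.card + sB.card = (univ.filter (fun q => x q ≠ 0)).card := by
    rw [hsA, hsB, Finset.card_filter, Finset.card_filter, Finset.card_filter,
      Fintype.sum_sum_type]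
  have hcardA : sA.card < d := by omega
  have hcardB : sB.card < dT := by omega
  -- the check equation
  have hmat : H * A = B * H := by
    apply zmod2_matrix_eq_of_add_eq_zero
    ext c v
    have hh := congrFun hx (c, v)
    simp only [hgpHZ, Matrix.mulVec, dotProduct, Fintype.sum_sum_type,
      fromCols_apply_inl, fromCols_apply_inr, kroneckerMap_apply,
      Matrix.one_apply, mul_ite, ite_mul, mul_one, mul_zero, one_mul, zero_mul,
      Fintype.sum_prod_type, Finset.sum_ite_eq, Finset.sum_ite_eq', Finset.mem_univ,
      if_true, Pi.zero_apply] at hh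
    rw [Matrix.add_apply, Matrix.mul_apply, Matrix.mul_apply, Matrix.zero_apply]
    convert hh using 2
    rw [Finset.sum_comm]
    simp [hB, mul_comm]
  -- kernel preservation
  have hAker : ∀ y : Fin n → ZMod 2, H.mulVec y = 0 → A.mulVec y = 0 := by
    intro y hy
    by_contra hne
    have h0 : H.mulVec (A.mulVec y) = 0 := by
      rw [Matrix.mulVec_mulVec, hmat, ← Matrix.mulVec_mulVec, hy, Matrix.mulVec_zero]
    have hle := hd _ h0 hne
    have hsub : (univ.filter fun v => (A.mulVec y) v ≠ 0) ⊆ sA.image Prod.fst := by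
      intro v hv
      simp only [mem_filter, mem_univ, true_and] at hv
      have hex : ∃ v2, A v v2 ≠ 0 := by
        by_contra hall
        push_neg at hall
        exact hv (by simp [Matrix.mulVec, dotProduct, hall])
      obtain ⟨v2, hv2⟩ := hex
      exact Finset.mem_image.mpr ⟨(v, v2), by simp [hsA, hv2], rfl⟩
    have h1 := (Finset.card_le_card hsub).trans Finset.card_image_le
    omega
  have hBker : ∀ z : Fin m → ZMod 2, Hᵀ.mulVec z = 0 → Matrix.vecMul z B = 0 := by
    intro z hz
    by_contra hne
    have h0 : Hᵀ.mulVec (Matrix.vecMul z B) = 0 := by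
      rw [Matrix.mulVec_transpose, Matrix.vecMul_vecMul, ← hmat,
        ← Matrix.vecMul_vecMul, ← Matrix.mulVec_transpose H z, hz, Matrix.zero_vecMul]
    have hle := hdT _ h0 hne
    have hsub : (univ.filter fun c => (Matrix.vecMul z B) c ≠ 0) ⊆ sB.image Prod.snd := by
      intro c hc
      simp only [mem_filter, mem_univ, true_and] at hc
      have hex : ∃ c1, B c1 c ≠ 0 := by
        by_contra hall
        push_neg at hall
        exact hc (by simp [Matrix.vecMul, dotProduct, hall])
      obtain ⟨c1, hc1⟩ := hex
      exact Finset.mem_image.mpr ⟨(c1, c), by simp [hsB, hc1], rfl⟩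
    have h1 := (Finset.card_le_card hsub).trans Finset.card_image_le
    omega
  have hA1 : A * (G * H) = A := colfix H G A hG hAker
  have hB1 : H * (G * B) = B := rowfix H G B hG hBker
  obtain ⟨hΛH, hHΛ⟩ := stab_eqs H G A B hG hmat hA1 hB1
  -- conclude: x lies in the row span of H_X
  apply hxrow
  have hxeq : x = ∑ g : Fin n × Fin m, (A * G + G * (H * (G * B + A * G))) g.1 g.2 •
      hgpHX m n H g := by
    funext q
    cases q with
    | inl p => rw [span_apply_inl, hΛH]
    | inr p => rw [span_apply_inr, hHΛ]
  rw [hxeq]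
  exact Submodule.sum_mem _ fun g _ =>
    Submodule.smul_mem _ _ (Submodule.subset_span ⟨g, rfl⟩)
end
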